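/- For every root λ, the subgraph of the Coxeter graph induced on the support supp(λ) is connected. -/

import Mathlib

open Real

variable {B : Type*}

/-- The pairing constant `⟨α_s, α_t⟩` of the standard bilinear form:
`-cos (π / M s t)` if `M s t ≠ 0`, and `-1` if `M s t = 0` (i.e. `m_{s,t} = ∞`). -/
noncomputable def pairing (M : CoxeterMatrix B) (s t : B) : ℝ :=
  if M s t = 0 then -1 else -Real.cos (Real.pi / (M s t : ℝ))

/-- The standard symmetric bilinear form on `V = B → ℝ`. -/
noncomputable def form [Fintype B] (M : CoxeterMatrix B) (v w : B → ℝ) : ℝ :=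
  ∑ s, ∑ t, v s * w t * pairing M s t

/-- The simple root `α_s`, i.e. the standard basis vector at `s`. -/
noncomputable def sroot [DecidableEq B] (s : B) : B → ℝ := Pi.single s 1

/-- `λ` is a root: `λ = ρ(w) α_s` for some `w ∈ W`, `s ∈ B`. -/
def IsRoot [DecidableEq B] (M : CoxeterMatrix B)
    (ρ : M.Group →* Module.End ℝ (B → ℝ)) (lam : B → ℝ) : Prop :=
  ∃ (w : M.Group) (s : B), ρ w (sroot s) = lam

/-- `λ` is positive: all coordinates are nonnegative. -/
def IsPos (lam : B → ℝ) : Prop := ∀ s, 0 ≤ lam s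

/-- `λ` is negative: all coordinates are nonpositive. -/
def IsNeg (lam : B → ℝ) : Prop := ∀ s, lam s ≤ 0

/-- `λ` is a positive root. -/
def IsPosRoot [DecidableEq B] (M : CoxeterMatrix B)
    (ρ : M.Group →* Module.End ℝ (B → ℝ)) (lam : B → ℝ) : Prop :=
  IsRoot M ρ lam ∧ IsPos lam

/-- `λ` dominates `μ`: for every `w ∈ W`, if `ρ(w) μ` is positive then so is `ρ(w) λ`. -/
def Dominates (M : CoxeterMatrix B)
    (ρ : M.Group →* Module.End ℝ (B → ℝ)) (lam mu : B → ℝ) : Prop :=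
  ∀ w : M.Group, IsPos (ρ w mu) → IsPos (ρ w lam)

/-- `λ` is a minimal root: a positive root dominating no positive root other than itself. -/
def IsMinimal [DecidableEq B] (M : CoxeterMatrix B)
    (ρ : M.Group →* Module.End ℝ (B → ℝ)) (lam : B → ℝ) : Prop :=
  IsPosRoot M ρ lam ∧
    ∀ mu, IsPosRoot M ρ mu → Dominates M ρ lam mu → mu = lam

/-- The depth `δ(λ)` of a positive root:
the least Coxeter length of a `w ∈ W` with `ρ(w⁻¹) λ` negative. -/
noncomputable def depth (M : CoxeterMatrix B)
    (ρ : M.Group →* Module.End ℝ (B → ℝ)) (lam : B → ℝ) : ℕ :=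
  sInf {n | ∃ w : M.Group, IsNeg (ρ w⁻¹ lam) ∧ M.toCoxeterSystem.length w = n}

/-- The partial order `λ ⪯ μ` on positive roots:
`μ = ρ(w) λ` for some `w` with `δ(μ) = ℓ(w) + δ(λ)`. -/
def PLE (M : CoxeterMatrix B)
    (ρ : M.Group →* Module.End ℝ (B → ℝ)) (lam mu : B → ℝ) : Prop :=
  ∃ w : M.Group, mu = ρ w lam ∧
    depth M ρ mu = M.toCoxeterSystem.length w + depth M ρ lam

/-- The Coxeter graph of `M`: distinct `s`, `t` are adjacent iff `M s t ≥ 3` or `M s t = 0`. -/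
def coxGraph (M : CoxeterMatrix B) : SimpleGraph B where
  Adj s t := s ≠ t ∧ (M s t = 0 ∨ 3 ≤ M s t)
  symm := by
    constructor
    intro s t h
    exact ⟨h.1.symm, by rw [M.symmetric t s]; exact h.2⟩
  loopless := by constructor; intro s h; exact h.1 rfl

/-- The support of a vector `λ ∈ V`. -/
def supp (lam : B → ℝ) : Set B := {s | lam s ≠ 0}

section Lemmas

variable [DecidableEq B] [Fintype B] (M : CoxeterMatrix B)

lemma pairing_diag (s : B) : pairing M s s = 1 := by
  simp [pairing, M.diagonal s, Real.cos_pi]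

lemma pairing_comm (s t : B) : pairing M s t = pairing M t s := by
  unfold pairing; rw [M.symmetric s t]

lemma two_le_M {s t : B} (hst : s ≠ t) (h0 : M s t ≠ 0) : 2 ≤ M s t := by
  have := M.off_diagonal s t hst; omega

lemma pairing_nonpos {s t : B} (hst : s ≠ t) : pairing M s t ≤ 0 := by
  unfold pairing
  split
  · norm_num
  · rename_i h0
    have h2 : 2 ≤ M s t := two_le_M M hst h0
    have : Real.cos (Real.pi / (M s t : ℝ)) ≥ 0 := by
      apply Real.cos_nonneg_of_mem_Icc
      constructor
      · have : (0:ℝ) ≤ Real.pi / (M s t : ℝ) := by positivity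
        linarith [Real.pi_pos]
      · rw [div_le_div_iff₀ (by positivity) (by norm_num)]
        have : (2:ℝ) ≤ (M s t : ℝ) := by exact_mod_cast h2
        nlinarith [Real.pi_pos]
    linarith

lemma pairing_neg_of_adj {s t : B} (hst : s ≠ t) (h : M s t = 0 ∨ 3 ≤ M s t) :
    pairing M s t < 0 := by
  unfold pairing
  rcases h with h | h
  · simp [h]
  · have h0 : M s t ≠ 0 := by omega
    simp only [h0, if_false, neg_neg, neg_lt, neg_zero]
    apply Real.cos_pos_of_mem_Ioo
    constructor
    · have : (0:ℝ) < Real.pi / (M s t : ℝ) := by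
        apply div_pos Real.pi_pos; exact_mod_cast Nat.pos_of_ne_zero h0
      linarith [Real.pi_pos]
    · rw [div_lt_div_iff₀ (by exact_mod_cast Nat.pos_of_ne_zero h0) (by norm_num)]
      have : (3:ℝ) ≤ (M s t : ℝ) := by exact_mod_cast h
      nlinarith [Real.pi_pos]

lemma adj_of_pairing_neg {s t : B} (hst : s ≠ t) (h : pairing M s t < 0) :
    M s t = 0 ∨ 3 ≤ M s t := by
  by_contra hc
  push_neg at hc
  obtain ⟨h0, h3⟩ := hc
  have h2 : M s t = 2 := by have := two_le_M M hst h0; omega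
  rw [pairing, if_neg h0, h2] at h
  norm_num [Real.cos_pi_div_two] at h

lemma form_add_left (u v w : B → ℝ) : form M (u + v) w = form M u w + form M v w := by
  simp [form, add_mul, Finset.sum_add_distrib]

lemma form_smul_left (a : ℝ) (u w : B → ℝ) : form M (a • u) w = a * form M u w := by
  simp only [form, Finset.mul_sum]
  refine Finset.sum_congr rfl fun s _ => Finset.sum_congr rfl fun t _ => ?_
  simp [Pi.smul_apply]; ring

lemma form_comm (v w : B → ℝ) : form M v w = form M w v := by
  unfold form
  rw [Finset.sum_comm]
  refine Finset.sum_congr rfl fun s _ => Finset.sum_congr rfl fun t _ => ?_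
  rw [pairing_comm]; ring

lemma form_add_right (u v w : B → ℝ) : form M u (v + w) = form M u v + form M u w := by
  rw [form_comm, form_add_left, form_comm M v, form_comm M w]

lemma form_smul_right (a : ℝ) (u w : B → ℝ) : form M u (a • w) = a * form M u w := by
  rw [form_comm, form_smul_left, form_comm]

lemma form_sub_smul_left (u v w : B → ℝ) (c : ℝ) :
    form M (u - c • v) w = form M u w - c * form M v w := by
  rw [sub_eq_add_neg, ← neg_smul, form_add_left, form_smul_left]; ring

lemma form_sub_smul_right (u v w : B → ℝ) (c : ℝ) :
    form M u (v - c • w) = form M u v - c * form M u w := by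
  rw [sub_eq_add_neg, ← neg_smul, form_add_right, form_smul_right]; ring

lemma form_sroot_sroot (p r : B) : form M (sroot p) (sroot r) = pairing M p r := by
  simp [form, sroot, Pi.single_apply]

end Lemmas
set_option linter.unusedSectionVars false

section Lemmas2

variable [DecidableEq B] [Fintype B] (M : CoxeterMatrix B)
  (ρ : M.Group →* Module.End ℝ (B → ℝ))

def Hrho (M : CoxeterMatrix B) [DecidableEq B] [Fintype B]
    (ρ : M.Group →* Module.End ℝ (B → ℝ)) : Prop :=
  ∀ (s : B) (v : B → ℝ), ρ (M.simple s) v = v - (2 * form M v (sroot s)) • sroot s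

lemma form_rho_simple (hρ : Hrho M ρ) (i : B) (x y : B → ℝ) :
    form M (ρ (M.simple i) x) (ρ (M.simple i) y) = form M x y := by
  rw [hρ, hρ, form_sub_smul_left, form_sub_smul_right, form_sub_smul_right,
    form_sroot_sroot, pairing_diag, form_comm M (sroot i) y]
  ring

lemma form_rho (hρ : Hrho M ρ) (w : M.Group) (x y : B → ℝ) :
    form M (ρ w x) (ρ w y) = form M x y := by
  induction w using M.toCoxeterSystem.simple_induction_left with
  | one => simp
  | mul_simple_left i w ih =>
    rw [CoxeterMatrix.toCoxeterSystem_simple] at *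
    rw [map_mul, Module.End.mul_apply, Module.End.mul_apply, form_rho_simple M ρ hρ, ih]

lemma rho_injective (w : M.Group) {x : B → ℝ} (h : ρ w x = 0) : x = 0 := by
  have : ρ w⁻¹ (ρ w x) = x := by
    rw [← Module.End.mul_apply, ← map_mul, inv_mul_cancel, map_one, Module.End.one_apply]
  rw [h, map_zero] at this
  exact this.symm

end Lemmas2
section Dlen

variable [DecidableEq B] [Fintype B] (M : CoxeterMatrix B) (s t : B)

/-- words with letters in {s, t} -/
def STWord (s t : B) (ω : List B) : Prop := ∀ i ∈ ω, i = s ∨ i = t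

/-- elements of the dihedral parabolic -/
def InD (v : M.Group) : Prop :=
  ∃ ω : List B, STWord s t ω ∧ M.toCoxeterSystem.wordProd ω = v

/-- length with respect to the alphabet {s, t} -/
noncomputable def dlen (v : M.Group) : ℕ :=
  sInf {n | ∃ ω : List B, STWord s t ω ∧ ω.length = n ∧ M.toCoxeterSystem.wordProd ω = v}

lemma dlen_le {ω : List B} (h : STWord s t ω) {v : M.Group}
    (hv : M.toCoxeterSystem.wordProd ω = v) : dlen M s t v ≤ ω.length :=
  Nat.sInf_le ⟨ω, h, rfl, hv⟩

lemma exists_min_word {v : M.Group} (hv : InD M s t v) :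
    ∃ ω : List B, STWord s t ω ∧ ω.length = dlen M s t v ∧
      M.toCoxeterSystem.wordProd ω = v := by
  obtain ⟨ω, h1, h2⟩ := hv
  have : dlen M s t v ∈ {n | ∃ ω : List B, STWord s t ω ∧ ω.length = n ∧
      M.toCoxeterSystem.wordProd ω = v} := Nat.sInf_mem ⟨ω.length, ω, h1, rfl, h2⟩
  exact this

lemma InD_one : InD M s t 1 := ⟨[], by intro i hi; simp at hi, by simp⟩

lemma dlen_one : dlen M s t 1 = 0 := by
  have := dlen_le M s t (ω := []) (v := 1) (by intro i hi; simp at hi) (by simp)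
  simpa using this

lemma eq_one_of_dlen_zero {v : M.Group} (hv : InD M s t v) (h : dlen M s t v = 0) :
    v = 1 := by
  obtain ⟨ω, _, hl, hp⟩ := exists_min_word M s t hv
  rw [h, List.length_eq_zero_iff] at hl
  rw [hl] at hp
  simpa using hp.symm

lemma length_wordProd_mod_two : ∀ ω : List B,
    M.toCoxeterSystem.length (M.toCoxeterSystem.wordProd ω) % 2 = ω.length % 2 := by
  intro ω
  induction ω with
  | nil => simp
  | cons i ω ih =>
    rw [M.toCoxeterSystem.wordProd_cons]
    rcases M.toCoxeterSystem.length_simple_mul (M.toCoxeterSystem.wordProd ω) i with h | h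
    all_goals simp only [List.length_cons]; omega

lemma dlen_mod_two {v : M.Group} (hv : InD M s t v) :
    dlen M s t v % 2 = M.toCoxeterSystem.length v % 2 := by
  obtain ⟨ω, _, hl, hp⟩ := exists_min_word M s t hv
  rw [← hl, ← hp, length_wordProd_mod_two]

lemma length_le_dlen {v : M.Group} (hv : InD M s t v) :
    M.toCoxeterSystem.length v ≤ dlen M s t v := by
  obtain ⟨ω, _, hl, hp⟩ := exists_min_word M s t hv
  rw [← hl, ← hp]
  exact M.toCoxeterSystem.length_wordProd_le ω

lemma InD_mul_simple {v : M.Group} (hv : InD M s t v) {r : B} (hr : r = s ∨ r = t) :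
    InD M s t (v * M.simple r) := by
  obtain ⟨ω, h1, h2⟩ := hv
  refine ⟨ω.concat r, ?_, ?_⟩
  · intro i hi
    rw [List.concat_eq_append, List.mem_append] at hi
    rcases hi with hi | hi
    · exact h1 i hi
    · simp at hi; subst hi; exact hr
  · rw [M.toCoxeterSystem.wordProd_concat, h2, CoxeterMatrix.toCoxeterSystem_simple]

lemma dlen_mul_simple_le {v : M.Group} (hv : InD M s t v) {r : B} (hr : r = s ∨ r = t) :
    dlen M s t (v * M.simple r) ≤ dlen M s t v + 1 := by
  obtain ⟨ω, h1, hl, hp⟩ := exists_min_word M s t hv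
  have : STWord s t (ω.concat r) := by
    intro i hi
    rw [List.concat_eq_append, List.mem_append] at hi
    rcases hi with hi | hi
    · exact h1 i hi
    · simp at hi; subst hi; exact hr
  have h2 := dlen_le M s t this
    (v := v * M.simple r)
    (by rw [M.toCoxeterSystem.wordProd_concat, hp, CoxeterMatrix.toCoxeterSystem_simple])
  simpa [hl] using h2

lemma dlen_simple_mul_le {v : M.Group} (hv : InD M s t v) {r : B} (hr : r = s ∨ r = t) :
    dlen M s t (M.simple r * v) ≤ dlen M s t v + 1 := by
  obtain ⟨ω, h1, hl, hp⟩ := exists_min_word M s t hv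
  have hw : STWord s t (r :: ω) := by
    intro i hi
    rcases List.mem_cons.mp hi with hi | hi
    · subst hi; exact hr
    · exact h1 i hi
  have h2 := dlen_le M s t hw
    (v := M.simple r * v)
    (by rw [M.toCoxeterSystem.wordProd_cons, hp, CoxeterMatrix.toCoxeterSystem_simple])
  simpa [hl] using h2

lemma cancel_right_simple (v : M.Group) (r : B) : v * M.simple r * M.simple r = v := by
  rw [← CoxeterMatrix.toCoxeterSystem_simple]
  exact M.toCoxeterSystem.simple_mul_simple_cancel_right r

lemma InD_of_mul_simple {v : M.Group} {r : B} (hr : r = s ∨ r = t)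
    (hv : InD M s t (v * M.simple r)) : InD M s t v := by
  have := InD_mul_simple M s t hv hr
  rwa [cancel_right_simple] at this

lemma dlen_mul_simple {v : M.Group} (hv : InD M s t v) {r : B} (hr : r = s ∨ r = t) :
    dlen M s t (v * M.simple r) = dlen M s t v + 1 ∨
      dlen M s t (v * M.simple r) + 1 = dlen M s t v := by
  have h1 := dlen_mul_simple_le M s t hv hr
  have h2 : dlen M s t v ≤ dlen M s t (v * M.simple r) + 1 := by
    have := dlen_mul_simple_le M s t (InD_mul_simple M s t hv hr) hr
    rwa [cancel_right_simple] at this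
  have p1 := dlen_mod_two M s t hv
  have p2 := dlen_mod_two M s t (InD_mul_simple M s t hv hr)
  have hL : M.toCoxeterSystem.length (v * M.simple r)
      = M.toCoxeterSystem.length v + 1 ∨
      M.toCoxeterSystem.length (v * M.simple r) + 1 = M.toCoxeterSystem.length v := by
    rw [← CoxeterMatrix.toCoxeterSystem_simple]
    exact M.toCoxeterSystem.length_mul_simple v r
  omega

end Dlen
section AltWords

open CoxeterSystem

variable [DecidableEq B] [Fintype B] (M : CoxeterMatrix B) (s t : B)

lemma STWord_alternatingWord : ∀ (k : ℕ) (x y : B), (x = s ∨ x = t) → (y = s ∨ y = t) →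
    STWord s t (alternatingWord x y k) := by
  intro k
  induction k with
  | zero => intro x y _ _ i hi; simp [alternatingWord] at hi
  | succ k ih =>
    intro x y hx hy i hi
    rw [alternatingWord_succ'] at hi
    rcases List.mem_cons.mp hi with hi | hi
    · subst hi; split <;> assumption
    · exact ih x y hx hy i hi

lemma alternatingWord_one (x y : B) : alternatingWord x y 1 = [y] := by
  rw [alternatingWord_succ]; rfl

lemma InD_wordProd {ω : List B} (h : STWord s t ω) :
    InD M s t (M.toCoxeterSystem.wordProd ω) := ⟨ω, h, rfl⟩

lemma min_word_alt (hst : s ≠ t) : ∀ (k : ℕ) (ω : List B), STWord s t ω → ω.length = k →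
    dlen M s t (M.toCoxeterSystem.wordProd ω) = k →
    ω = alternatingWord s t k ∨ ω = alternatingWord t s k := by
  intro k
  induction k using Nat.strong_induction_on with
  | _ k IH =>
  intro ω hw hlen hmin
  match k, hlen with
  | 0, hlen =>
    left
    rw [List.length_eq_zero_iff] at hlen
    rw [hlen]; rfl
  | (j+1), hlen =>
    rcases ω.eq_nil_or_concat with rfl | ⟨ω', r, rfl⟩
    · simp at hlen
    · have hlen' : ω'.length = j := by
        rw [List.concat_eq_append, List.length_append] at hlen; simpa using hlen
      have hw' : STWord s t ω' := fun i hi => hw i (by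
        rw [List.concat_eq_append, List.mem_append]; exact Or.inl hi)
      have hr : r = s ∨ r = t := hw r (by
        rw [List.concat_eq_append, List.mem_append]; right; simp)
      have hprod : M.toCoxeterSystem.wordProd (ω'.concat r)
          = M.toCoxeterSystem.wordProd ω' * M.simple r := by
        rw [M.toCoxeterSystem.wordProd_concat, CoxeterMatrix.toCoxeterSystem_simple]
      have hback : M.toCoxeterSystem.wordProd (ω'.concat r) * M.simple r
          = M.toCoxeterSystem.wordProd ω' := by
        rw [hprod, cancel_right_simple]
      have hmin' : dlen M s t (M.toCoxeterSystem.wordProd ω') = j := by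
        have hle : dlen M s t (M.toCoxeterSystem.wordProd ω') ≤ j :=
          le_of_le_of_eq (dlen_le M s t hw' rfl) hlen'
        have hge : j + 1 ≤ dlen M s t (M.toCoxeterSystem.wordProd ω') + 1 := by
          rw [← hmin]
          calc dlen M s t (M.toCoxeterSystem.wordProd (ω'.concat r))
              = dlen M s t (M.toCoxeterSystem.wordProd ω' * M.simple r) := by rw [hprod]
            _ ≤ dlen M s t (M.toCoxeterSystem.wordProd ω') + 1 :=
                dlen_mul_simple_le M s t (InD_wordProd M s t hw') hr
        omega
      rcases IH j (by omega) ω' hw' hlen' hmin' with h' | h'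
      · -- ω' = alternatingWord s t j : must have r = s (or j = 0)
        rcases Nat.eq_zero_or_pos j with hj | hj
        · subst hj
          have : ω' = [] := List.length_eq_zero_iff.mp hlen'
          subst this
          rcases hr with rfl | rfl
          · right; rw [alternatingWord_one]; rfl
          · left; rw [alternatingWord_one]; rfl
        · have hrs : r = s := by
            rcases hr with hr1 | hr1
            · exact hr1
            · exfalso
              rw [hr1] at hmin
              -- ω = (alternatingWord s t j).concat t, but alternatingWord s t j ends in t
              obtain ⟨j', rfl⟩ : ∃ j', j = j' + 1 := ⟨j - 1, by omega⟩
              have hsplit : alternatingWord s t (j' + 1)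
                  = (alternatingWord t s j').concat t := alternatingWord_succ s t j'
              have : M.toCoxeterSystem.wordProd (ω'.concat t)
                  = M.toCoxeterSystem.wordProd (alternatingWord t s j') := by
                rw [h', hsplit, M.toCoxeterSystem.wordProd_concat,
                  M.toCoxeterSystem.wordProd_concat, CoxeterMatrix.toCoxeterSystem_simple,
                  cancel_right_simple]
              have hle := dlen_le M s t
                (STWord_alternatingWord s t j' t s (Or.inr rfl) (Or.inl rfl)) this.symm
              rw [length_alternatingWord] at hle
              omega
          subst hrs
          right
          rw [h', ← alternatingWord_succ]
      · rcases Nat.eq_zero_or_pos j with hj | hj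
        · subst hj
          have : ω' = [] := List.length_eq_zero_iff.mp hlen'
          subst this
          rcases hr with rfl | rfl
          · right; rw [alternatingWord_one]; rfl
          · left; rw [alternatingWord_one]; rfl
        · have hrt : r = t := by
            rcases hr with hr1 | hr1
            · exfalso
              rw [hr1] at hmin
              obtain ⟨j', rfl⟩ : ∃ j', j = j' + 1 := ⟨j - 1, by omega⟩
              have hsplit : alternatingWord t s (j' + 1)
                  = (alternatingWord s t j').concat s := alternatingWord_succ t s j'
              have : M.toCoxeterSystem.wordProd (ω'.concat s)
                  = M.toCoxeterSystem.wordProd (alternatingWord s t j') := by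
                rw [h', hsplit, M.toCoxeterSystem.wordProd_concat,
                  M.toCoxeterSystem.wordProd_concat, CoxeterMatrix.toCoxeterSystem_simple,
                  cancel_right_simple]
              have hle := dlen_le M s t
                (STWord_alternatingWord s t j' s t (Or.inl rfl) (Or.inr rfl)) this.symm
              rw [length_alternatingWord] at hle
              omega
            · exact hr1
          subst hrt
          left
          rw [h', ← alternatingWord_succ]

end AltWords
section Bound

open CoxeterSystem

variable [DecidableEq B] [Fintype B] (M : CoxeterMatrix B) (s t : B)

lemma dlen_alt_lt (hst : s ≠ t) (h0 : M s t ≠ 0) : ∀ k, M s t < k →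
    dlen M s t (M.toCoxeterSystem.wordProd (alternatingWord s t k)) < k ∧
    dlen M s t (M.toCoxeterSystem.wordProd (alternatingWord t s k)) < k := by
  intro k
  induction k using Nat.strong_induction_on with
  | _ k IH =>
  intro hk
  have hts : M t s = M s t := M.symmetric t s
  by_cases h2m : k ≤ M s t * 2
  · constructor
    · have heq := M.toCoxeterSystem.prod_alternatingWord_eq_prod_alternatingWord_sub s t k h2m
      have hle := dlen_le M s t
        (STWord_alternatingWord s t (M s t * 2 - k) t s (Or.inr rfl) (Or.inl rfl)) heq.symm
      rw [length_alternatingWord] at hle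
      omega
    · have heq := M.toCoxeterSystem.prod_alternatingWord_eq_prod_alternatingWord_sub t s k
        (by omega)
      have hle := dlen_le M s t
        (STWord_alternatingWord s t (M t s * 2 - k) s t (Or.inl rfl) (Or.inr rfl)) heq.symm
      rw [length_alternatingWord] at hle
      omega
  · obtain ⟨j, rfl⟩ : ∃ j, k = j + 1 := ⟨k - 1, by omega⟩
    have h2 : 2 ≤ M s t := two_le_M M hst h0
    have hIH := IH j (by omega) (by omega)
    constructor
    · rw [alternatingWord_succ' s t j, M.toCoxeterSystem.wordProd_cons,
        CoxeterMatrix.toCoxeterSystem_simple]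
      have hin : InD M s t (M.toCoxeterSystem.wordProd (alternatingWord s t j)) :=
        InD_wordProd M s t (STWord_alternatingWord s t j s t (Or.inl rfl) (Or.inr rfl))
      have := dlen_simple_mul_le M s t hin
        (r := if Even j then t else s) (by split <;> simp)
      omega
    · rw [alternatingWord_succ' t s j, M.toCoxeterSystem.wordProd_cons,
        CoxeterMatrix.toCoxeterSystem_simple]
      have hin : InD M s t (M.toCoxeterSystem.wordProd (alternatingWord t s j)) :=
        InD_wordProd M s t (STWord_alternatingWord s t j t s (Or.inr rfl) (Or.inl rfl))
      have := dlen_simple_mul_le M s t hin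
        (r := if Even j then s else t) (by split <;> simp)
      omega

end Bound

section Cheb

noncomputable def Xseq (c : ℝ) : ℕ → ℝ
  | 0 => 0
  | 1 => 1
  | (n+2) => 2*c*Xseq c (n+1) - Xseq c n

@[simp] lemma Xseq_zero (c : ℝ) : Xseq c 0 = 0 := rfl
@[simp] lemma Xseq_one (c : ℝ) : Xseq c 1 = 1 := rfl
lemma Xseq_rec (c : ℝ) (n : ℕ) : Xseq c (n+2) = 2*c*Xseq c (n+1) - Xseq c n := rfl
lemma Xseq_two (c : ℝ) : Xseq c 2 = 2*c := by rw [Xseq_rec]; simp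

lemma Xseq_one_nonneg : ∀ n, 0 ≤ Xseq 1 n ∧ Xseq 1 n ≤ Xseq 1 (n+1) := by
  intro n
  induction n with
  | zero => norm_num
  | succ n ih =>
    have h := Xseq_rec 1 n
    constructor
    · linarith [ih.1, ih.2]
    · rw [Xseq_rec]; linarith [ih.1, ih.2]

lemma Xseq_sin {m : ℕ} (hm : 2 ≤ m) :
    ∀ n, Xseq (Real.cos (Real.pi/m)) n * Real.sin (Real.pi/m)
      = Real.sin (n * (Real.pi/m)) := by
  intro n
  induction n using Nat.strong_induction_on with
  | _ n IH =>
  match n with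
  | 0 => simp
  | 1 => simp
  | (n+2) =>
    have h1 := IH (n+1) (by omega)
    have h2 := IH n (by omega)
    have e1 : ((n+2 : ℕ) : ℝ) * (Real.pi/m) = ((n+1:ℕ):ℝ)*(Real.pi/m) + Real.pi/m := by
      push_cast; ring
    have e2 : ((n : ℕ) : ℝ) * (Real.pi/m) = ((n+1:ℕ):ℝ)*(Real.pi/m) - Real.pi/m := by
      push_cast; ring
    rw [Xseq_rec, e1, Real.sin_add]
    rw [e2, Real.sin_sub] at h2
    linear_combination (2*Real.cos (Real.pi/m)) * h1 - h2

lemma sin_pos_of_two_le {m : ℕ} (hm : 2 ≤ m) : 0 < Real.sin (Real.pi/m) := by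
  apply Real.sin_pos_of_pos_of_lt_pi
  · apply div_pos Real.pi_pos; exact_mod_cast (by omega : 0 < m)
  · rw [div_lt_iff₀ (by exact_mod_cast (by omega : 0 < m))]
    have : (2:ℝ) ≤ (m:ℝ) := by exact_mod_cast hm
    nlinarith [Real.pi_pos]

lemma Xseq_nonneg {m : ℕ} (hm : 2 ≤ m) {n : ℕ} (hn : n ≤ m) :
    0 ≤ Xseq (Real.cos (Real.pi/m)) n := by
  have hs := sin_pos_of_two_le hm
  have hx := Xseq_sin hm n
  have hsin : 0 ≤ Real.sin (n * (Real.pi/m)) := by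
    apply Real.sin_nonneg_of_nonneg_of_le_pi
    · positivity
    · have hmpos : (0:ℝ) < (m:ℝ) := by exact_mod_cast (by omega : 0 < m)
      have : (n:ℝ) ≤ (m:ℝ) := by exact_mod_cast hn
      calc (n:ℝ) * (Real.pi/m) ≤ (m:ℝ) * (Real.pi/m) := by
            apply mul_le_mul_of_nonneg_right this; positivity
        _ = Real.pi := by field_simp
  nlinarith

end Cheb
section Plane

open CoxeterSystem

variable [DecidableEq B] [Fintype B] (M : CoxeterMatrix B) (s t : B)

noncomputable def cconst (M : CoxeterMatrix B) (s t : B) : ℝ :=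
  if M s t = 0 then 1 else Real.cos (Real.pi / (M s t : ℝ))

lemma pairing_st : pairing M s t = - cconst M s t := by
  unfold pairing cconst; split <;> simp

lemma pairing_ts : pairing M t s = - cconst M s t := by
  rw [pairing_comm, pairing_st]

lemma form_plane (a b : ℝ) (p q r : B) :
    form M (a • sroot p + b • sroot q) (sroot r)
      = a * pairing M p r + b * pairing M q r := by
  rw [form_add_left, form_smul_left, form_smul_left, form_sroot_sroot, form_sroot_sroot]

lemma rho_plane_s (ρ : M.Group →* Module.End ℝ (B → ℝ)) (hρ : Hrho M ρ) (a b : ℝ) :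
    ρ (M.simple s) (a • sroot s + b • sroot t)
      = (2*(cconst M s t)*b - a) • sroot s + b • sroot t := by
  rw [hρ, form_plane, pairing_diag, pairing_ts]
  module

lemma rho_plane_t (ρ : M.Group →* Module.End ℝ (B → ℝ)) (hρ : Hrho M ρ) (a b : ℝ) :
    ρ (M.simple t) (a • sroot s + b • sroot t)
      = a • sroot s + (2*(cconst M s t)*a - b) • sroot t := by
  rw [hρ, form_plane, pairing_diag, pairing_st]
  module

lemma rho_alt (ρ : M.Group →* Module.End ℝ (B → ℝ)) (hρ : Hrho M ρ) : ∀ k : ℕ,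
    (Even k → ρ (M.toCoxeterSystem.wordProd (alternatingWord s t k)) (sroot s)
      = Xseq (cconst M s t) (k+1) • sroot s + Xseq (cconst M s t) k • sroot t) ∧
    (¬ Even k → ρ (M.toCoxeterSystem.wordProd (alternatingWord s t k)) (sroot s)
      = Xseq (cconst M s t) k • sroot s + Xseq (cconst M s t) (k+1) • sroot t) := by
  intro k
  induction k with
  | zero =>
    constructor
    · intro _
      show ρ (M.toCoxeterSystem.wordProd []) (sroot s) = _
      rw [M.toCoxeterSystem.wordProd_nil, map_one, Module.End.one_apply]
      simp
    · intro h; exact absurd Even.zero h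
  | succ k ih =>
    have hrec : alternatingWord s t (k+1) = (if Even k then t else s) :: alternatingWord s t k :=
      alternatingWord_succ' s t k
    by_cases hk : Even k
    · have hprev := ih.1 hk
      constructor
      · intro h
        exfalso
        rw [Nat.even_add_one] at h
        exact h hk
      · intro _
        rw [hrec, if_pos hk, M.toCoxeterSystem.wordProd_cons,
          CoxeterMatrix.toCoxeterSystem_simple, map_mul, Module.End.mul_apply, hprev,
          rho_plane_t M s t ρ hρ, ← Xseq_rec]
    · have hprev := ih.2 hk
      constructor
      · intro _
        rw [hrec, if_neg hk, M.toCoxeterSystem.wordProd_cons,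
          CoxeterMatrix.toCoxeterSystem_simple, map_mul, Module.End.mul_apply, hprev,
          rho_plane_s M s t ρ hρ, ← Xseq_rec]
      · intro h
        rw [Nat.even_add_one, not_not] at h
        exact absurd h hk

lemma dihedral_pos (hst : s ≠ t) (ρ : M.Group →* Module.End ℝ (B → ℝ)) (hρ : Hrho M ρ)
    {v : M.Group} (hv : InD M s t v)
    (h : dlen M s t (v * M.simple s) = dlen M s t v + 1) :
    ∃ a b : ℝ, 0 ≤ a ∧ 0 ≤ b ∧ (b ≠ 0 → pairing M s t < 0) ∧
      ρ v (sroot s) = a • sroot s + b • sroot t := by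
  set k := dlen M s t v with hk
  obtain ⟨ω, hw, hlen, hprod⟩ := exists_min_word M s t hv
  have halt : ω = alternatingWord s t k ∨ ω = alternatingWord t s k := by
    apply min_word_alt M s t hst k ω hw hlen
    rw [hprod, ← hk]
  -- rule out the word ending in s (when k ≥ 1)
  have hvalt : v = M.toCoxeterSystem.wordProd (alternatingWord s t k) := by
    rcases halt with h' | h'
    · rw [← hprod, h']
    · rcases Nat.eq_zero_or_pos k with hk0 | hk1
      · rw [← hprod, h', hk0]; rfl
      · exfalso
        obtain ⟨j, hj⟩ : ∃ j, k = j + 1 := ⟨k - 1, by omega⟩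
        have hsplit : alternatingWord t s (j + 1) = (alternatingWord s t j).concat s :=
          alternatingWord_succ t s j
        have : v * M.simple s = M.toCoxeterSystem.wordProd (alternatingWord s t j) := by
          rw [← hprod, h', hj, hsplit, M.toCoxeterSystem.wordProd_concat,
            CoxeterMatrix.toCoxeterSystem_simple, cancel_right_simple]
        have hle := dlen_le M s t
          (STWord_alternatingWord s t j s t (Or.inl rfl) (Or.inr rfl)) this.symm
        rw [length_alternatingWord] at hle
        omega
  have hvs : v * M.simple s = M.toCoxeterSystem.wordProd (alternatingWord t s (k+1)) := by
    rw [hvalt, alternatingWord_succ t s k, M.toCoxeterSystem.wordProd_concat,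
      CoxeterMatrix.toCoxeterSystem_simple]
  have hbound : M s t = 0 ∨ k + 1 ≤ M s t := by
    by_contra hc
    push_neg at hc
    obtain ⟨h0, hlt⟩ := hc
    have := (dlen_alt_lt M s t hst h0 (k+1) (by omega)).2
    rw [← hvs] at this
    omega
  -- the coefficients
  set c := cconst M s t with hc
  have hrhoalt := rho_alt M s t ρ hρ k
  -- nonnegativity of all Xseq values with index ≤ k+1
  have hXnn : ∀ n, n ≤ k + 1 → 0 ≤ Xseq c n := by
    intro n hn
    rcases hbound with h0 | hkm
    · have : c = 1 := by rw [hc, cconst, if_pos h0]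
      rw [this]
      exact (Xseq_one_nonneg n).1
    · have h0 : M s t ≠ 0 := by omega
      have h2 : 2 ≤ M s t := two_le_M M hst h0
      have : c = Real.cos (Real.pi / (M s t : ℝ)) := by rw [hc, cconst, if_neg h0]
      rw [this]
      exact Xseq_nonneg h2 (by omega)
  have hside : (∀ b : ℝ, (b = Xseq c k ∨ b = Xseq c (k+1)) → b ≠ 0 → pairing M s t < 0) ∨
      True := Or.inr trivial
  by_cases hkpar : Even k
  · refine ⟨Xseq c (k+1), Xseq c k, hXnn (k+1) le_rfl, hXnn k (by omega), ?_, ?_⟩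
    · intro hb0
      rw [pairing_st]
      rcases hbound with h0 | hkm
      · have : c = 1 := by rw [hc, cconst, if_pos h0]
        rw [hc] at this; rw [this]; norm_num
      · have h0 : M s t ≠ 0 := by omega
        have h2 : 2 ≤ M s t := two_le_M M hst h0
        by_cases h3 : 3 ≤ M s t
        · have := pairing_neg_of_adj M hst (Or.inr h3)
          rwa [pairing_st] at this
        · exfalso
          have hm2 : M s t = 2 := by omega
          have hk1 : k ≤ 1 := by omega
          have hk0 : k = 0 := by
            obtain ⟨r, hr⟩ := hkpar
            omega
          rw [hk0] at hb0
          simp at hb0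
    · rw [hvalt]
      exact hrhoalt.1 hkpar
  · refine ⟨Xseq c k, Xseq c (k+1), hXnn k (by omega), hXnn (k+1) le_rfl, ?_, ?_⟩
    · intro hb0
      rw [pairing_st]
      rcases hbound with h0 | hkm
      · have : c = 1 := by rw [hc, cconst, if_pos h0]
        rw [hc] at this; rw [this]; norm_num
      · have h0 : M s t ≠ 0 := by omega
        have h2 : 2 ≤ M s t := two_le_M M hst h0
        by_cases h3 : 3 ≤ M s t
        · have := pairing_neg_of_adj M hst (Or.inr h3)
          rwa [pairing_st] at this
        · exfalso
          have hm2 : M s t = 2 := by omega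
          have hk1 : k = 1 := by
            have hor : k = 0 ∨ k = 1 := by omega
            rcases hor with h | h
            · exact absurd (h ▸ Even.zero) hkpar
            · exact h
          have hczero : c = 0 := by
            rw [hc, cconst, if_neg h0, hm2]
            norm_num [Real.cos_pi_div_two]
          rw [hk1, Xseq_rec, hczero] at hb0
          simp at hb0
    · rw [hvalt]
      exact hrhoalt.2 hkpar

end Plane
section MainProof

open CoxeterSystem

variable [DecidableEq B] [Fintype B] (M : CoxeterMatrix B) (s t : B)

lemma InD_simple_mul {v : M.Group} (hv : InD M s t v) {r : B} (hr : r = s ∨ r = t) :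
    InD M s t (M.simple r * v) := by
  obtain ⟨ω, h1, h2⟩ := hv
  refine ⟨r :: ω, ?_, ?_⟩
  · intro i hi
    rcases List.mem_cons.mp hi with hi | hi
    · subst hi; exact hr
    · exact h1 i hi
  · rw [M.toCoxeterSystem.wordProd_cons, h2, CoxeterMatrix.toCoxeterSystem_simple]

lemma supp_sroot (x : B) : supp (sroot x) = {x} := by
  ext y
  simp [supp, sroot, Pi.single_apply]

lemma supp_neg (v : B → ℝ) : supp (-v) = supp v := by
  ext y; simp [supp]

lemma supp_smul {a : ℝ} (ha : a ≠ 0) (v : B → ℝ) : supp (a • v) = supp v := by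
  ext y; simp [supp, ha]

lemma supp_add_pos {a b : ℝ} (ha : 0 < a) (hb : 0 < b) {μ ν : B → ℝ}
    (hμ : IsPos μ) (hν : IsPos ν) : supp (a • μ + b • ν) = supp μ ∪ supp ν := by
  ext y
  simp only [supp, Set.mem_setOf_eq, Set.mem_union, Pi.add_apply, Pi.smul_apply, smul_eq_mul]
  constructor
  · intro h
    by_contra hc
    push_neg at hc
    obtain ⟨h1, h2⟩ := hc
    rw [h1, h2] at h
    simp at h
  · intro h
    have h1 := hμ y
    have h2 := hν y
    rcases h with h | h
    · have : 0 < μ y := lt_of_le_of_ne h1 (Ne.symm h)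
      nlinarith
    · have : 0 < ν y := lt_of_le_of_ne h2 (Ne.symm h)
      nlinarith

lemma induce_singleton_connected (G : SimpleGraph B) (x : B) :
    (G.induce ({x} : Set B)).Connected := by
  have hne : Nonempty ({x} : Set B) := ⟨⟨x, rfl⟩⟩
  refine ⟨?_⟩
  rintro ⟨a, ha⟩ ⟨b, hb⟩
  simp only [Set.mem_singleton_iff] at ha hb
  subst ha; subst hb
  rfl

theorem main_pos_conn (ρ : M.Group →* Module.End ℝ (B → ℝ)) (hρ : Hrho M ρ) :
    ∀ n : ℕ, ∀ w : M.Group, ∀ s' : B, M.toCoxeterSystem.length w = n →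
    M.toCoxeterSystem.length (w * M.simple s') = n + 1 →
    IsPos (ρ w (sroot s')) ∧ ((coxGraph M).induce (supp (ρ w (sroot s')))).Connected := by
  intro n
  induction n using Nat.strong_induction_on with
  | _ n IH =>
  intro w s' hlw hlws
  rcases Nat.eq_zero_or_pos n with hn0 | hn1
  · -- base case : w = 1
    subst hn0
    have hw1 : w = 1 := M.toCoxeterSystem.length_eq_zero_iff.mp hlw
    subst hw1
    rw [map_one, Module.End.one_apply]
    constructor
    · intro x
      simp only [sroot, Pi.single_apply]
      split <;> norm_num
    · rw [supp_sroot]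
      exact induce_singleton_connected _ s'
  · -- inductive step
    have hw1 : w ≠ 1 := by
      intro h
      rw [h, M.toCoxeterSystem.length_one] at hlw
      omega
    obtain ⟨t, ht⟩ := M.toCoxeterSystem.exists_rightDescent_of_ne_one hw1
    have ht' : M.toCoxeterSystem.length (w * M.simple t) < n := by
      have : M.toCoxeterSystem.length (w * M.toCoxeterSystem.simple t)
          < M.toCoxeterSystem.length w := ht
      rwa [CoxeterMatrix.toCoxeterSystem_simple, hlw] at this
    have hst : s' ≠ t := by
      intro h
      rw [← h] at ht'
      omega
    -- the maximal dihedral decomposition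
    set P : ℕ → Prop := fun k => ∃ v : M.Group, InD M s' t v ∧ dlen M s' t v = k ∧
      M.toCoxeterSystem.length (w * v⁻¹) + k = n with hP
    have hP0 : P 0 := ⟨1, InD_one M s' t, dlen_one M s' t, by simp [hlw]⟩
    have hbdd : ∀ k ∈ {k | P k}, k ≤ n := by
      rintro k ⟨v, _, _, hv3⟩
      omega
    have hPK : P (sSup {k | P k}) := Nat.sSup_mem ⟨0, hP0⟩ ⟨n, hbdd⟩
    set K := sSup {k | P k} with hKdef
    have hmax : ∀ k, P k → k ≤ K := fun k hk => le_csSup ⟨n, hbdd⟩ hk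
    obtain ⟨v, hvD, hvlen, hulen⟩ := hPK
    set u := w * v⁻¹ with hudef
    have hwuv : w = u * v := by rw [hudef]; group
    -- both s' and t increase the length of u
    have key : ∀ r : B, (r = s' ∨ r = t) →
        M.toCoxeterSystem.length (u * M.simple r) = M.toCoxeterSystem.length u + 1 := by
      intro r hr
      have hdich := M.toCoxeterSystem.length_mul_simple u r
      rw [CoxeterMatrix.toCoxeterSystem_simple] at hdich
      rcases hdich with h | h
      · exact h
      · exfalso
        have hv2D : InD M s' t (M.simple r * v) := InD_simple_mul M s' t hvD hr
        have h1 : dlen M s' t (M.simple r * v) ≤ K + 1 := by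
          have := dlen_simple_mul_le M s' t hvD hr
          omega
        have hsq : M.simple r * M.simple r = 1 := by
          rw [← CoxeterMatrix.toCoxeterSystem_simple]
          exact M.toCoxeterSystem.simple_mul_simple_self r
        have hw2 : w = (u * M.simple r) * (M.simple r * v) := by
          rw [show (u * M.simple r) * (M.simple r * v)
              = u * (M.simple r * M.simple r) * v by group, hsq, mul_one, ← hwuv]
        have hlen2 : n ≤ M.toCoxeterSystem.length (u * M.simple r)
            + dlen M s' t (M.simple r * v) := by
          calc n = M.toCoxeterSystem.length w := hlw.symm
            _ = M.toCoxeterSystem.length ((u * M.simple r) * (M.simple r * v)) := by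
                rw [← hw2]
            _ ≤ M.toCoxeterSystem.length (u * M.simple r)
                + M.toCoxeterSystem.length (M.simple r * v) :=
                M.toCoxeterSystem.length_mul_le _ _
            _ ≤ M.toCoxeterSystem.length (u * M.simple r)
                + dlen M s' t (M.simple r * v) := by
                have := length_le_dlen M s' t hv2D
                omega
        -- so dlen (σr * v) = K + 1 and P (K+1) holds
        have hd2 : dlen M s' t (M.simple r * v) = K + 1 := by omega
        have hPK1 : P (K + 1) := by
          refine ⟨M.simple r * v, hv2D, hd2, ?_⟩
          have hinvr : (M.simple r)⁻¹ = M.simple r := by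
            rw [← CoxeterMatrix.toCoxeterSystem_simple]
            exact M.toCoxeterSystem.inv_simple r
          have hinv : w * (M.simple r * v)⁻¹ = u * M.simple r := by
            rw [mul_inv_rev, hinvr, ← mul_assoc, ← hudef]
          rw [hinv]
          omega
        have := hmax (K+1) hPK1
        omega
    -- K ≥ 1 and the length of u
    have hK1 : 1 ≤ K := by
      by_contra hc
      push_neg at hc
      have hK0 : K = 0 := by omega
      have hv1 : v = 1 := eq_one_of_dlen_zero M s' t hvD (by omega)
      have huw : u = w := by rw [hudef, hv1]; group
      have hkt := key t (Or.inr rfl)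
      rw [huw] at hkt
      omega
    have hlu : M.toCoxeterSystem.length u + K = n := hulen
    have hlun : M.toCoxeterSystem.length u < n := by omega
    -- dlen (v * σ s') = K + 1
    have hds : dlen M s' t (v * M.simple s') = dlen M s' t v + 1 := by
      rcases dlen_mul_simple M s' t hvD (Or.inl rfl) with h | h
      · exact h
      · exfalso
        have hvsD : InD M s' t (v * M.simple s') := InD_mul_simple M s' t hvD (Or.inl rfl)
        have : M.toCoxeterSystem.length (w * M.simple s')
            ≤ M.toCoxeterSystem.length u + dlen M s' t (v * M.simple s') := by
          calc M.toCoxeterSystem.length (w * M.simple s')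
              = M.toCoxeterSystem.length (u * (v * M.simple s')) := by
                rw [hwuv, mul_assoc]
            _ ≤ M.toCoxeterSystem.length u + M.toCoxeterSystem.length (v * M.simple s') :=
                M.toCoxeterSystem.length_mul_le _ _
            _ ≤ M.toCoxeterSystem.length u + dlen M s' t (v * M.simple s') := by
                have := length_le_dlen M s' t hvsD
                omega
        omega
    -- apply the dihedral lemma
    obtain ⟨a, b, ha, hb, hbpair, hplane⟩ :=
      dihedral_pos M s' t hst ρ hρ hvD hds
    set μ := ρ u (sroot s') with hμdef
    set ν := ρ u (sroot t) with hνdef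
    have hlam : ρ w (sroot s') = a • μ + b • ν := by
      rw [hwuv, map_mul, Module.End.mul_apply, hplane, map_add, map_smul, map_smul]
    -- induction hypotheses
    have IHs := IH (M.toCoxeterSystem.length u) hlun u s' rfl
      (by rw [key s' (Or.inl rfl)])
    have IHt := IH (M.toCoxeterSystem.length u) hlun u t rfl
      (by rw [key t (Or.inr rfl)])
    obtain ⟨hμpos, hμconn⟩ := IHs
    obtain ⟨hνpos, hνconn⟩ := IHt
    rw [← hμdef] at hμpos hμconn
    rw [← hνdef] at hνpos hνconn
    constructor
    · -- positivity
      intro x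
      rw [hlam]
      simp only [Pi.add_apply, Pi.smul_apply, smul_eq_mul]
      exact add_nonneg (mul_nonneg ha (hμpos x)) (mul_nonneg hb (hνpos x))
    · -- connectivity
      have hab : ¬ (a = 0 ∧ b = 0) := by
        rintro ⟨rfl, rfl⟩
        have h0 : ρ v (sroot s') = 0 := by rw [hplane]; simp
        have := rho_injective M ρ v h0
        have := congrFun this s'
        simp [sroot] at this
      by_cases hb0 : b = 0
      · have ha0 : a ≠ 0 := fun h => hab ⟨h, hb0⟩
        have hsupp : supp (ρ w (sroot s')) = supp μ := by
          rw [hlam, hb0]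
          simp only [zero_smul, add_zero]
          exact supp_smul ha0 μ
        rw [hsupp]
        exact hμconn
      · by_cases ha0 : a = 0
        · have hsupp : supp (ρ w (sroot s')) = supp ν := by
            rw [hlam, ha0]
            simp only [zero_smul, zero_add]
            exact supp_smul hb0 ν
          rw [hsupp]
          exact hνconn
        · have hap : 0 < a := lt_of_le_of_ne ha (Ne.symm ha0)
          have hbp : 0 < b := lt_of_le_of_ne hb (Ne.symm hb0)
          have hsupp : supp (ρ w (sroot s')) = supp μ ∪ supp ν := by
            rw [hlam]
            exact supp_add_pos hap hbp hμpos hνpos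
          rw [hsupp]
          by_cases hint : (supp μ ∩ supp ν).Nonempty
          · exact SimpleGraph.induce_union_connected hμconn.preconnected hνconn.preconnected hint
          · have hform : form M μ ν = pairing M s' t := by
              rw [hμdef, hνdef, form_rho M ρ hρ, form_sroot_sroot]
            have hneg : form M μ ν < 0 := by
              rw [hform]
              exact hbpair hb0
            have hterm : ∃ p q, μ p * ν q * pairing M p q < 0 := by
              by_contra hc
              push_neg at hc
              have : 0 ≤ form M μ ν :=
                Finset.sum_nonneg fun p _ => Finset.sum_nonneg fun q _ => hc p q
              linarith
            obtain ⟨p, q, hpq⟩ := hterm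
            have hμp : μ p ≠ 0 := by
              intro h
              rw [h] at hpq
              simp at hpq
            have hνq : ν q ≠ 0 := by
              intro h
              rw [h] at hpq
              simp at hpq
            have hprodpos : 0 < μ p * ν q := by
              rcases lt_or_eq_of_le (mul_nonneg (hμpos p) (hνpos q)) with h | h
              · exact h
              · exfalso
                rcases mul_eq_zero.mp h.symm with h' | h'
                · exact hμp h'
                · exact hνq h'
            have hpairneg : pairing M p q < 0 := by nlinarith
            have hpqne : p ≠ q := by
              intro h
              rw [h, pairing_diag] at hpairneg
              linarith
            have hadj : (coxGraph M).Adj p q := ⟨hpqne, adj_of_pairing_neg M hpqne hpairneg⟩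
            exact SimpleGraph.connected_induce_union hμconn.preconnected hνconn.preconnected hμp hνq hadj

end MainProof
theorem statement13 [DecidableEq B] [Fintype B] (M : CoxeterMatrix B)
    (ρ : M.Group →* Module.End ℝ (B → ℝ))
    (hρ : ∀ (s : B) (v : B → ℝ),
      ρ (M.simple s) v = v - (2 * form M v (sroot s)) • sroot s)
    (lam : B → ℝ) (hroot : IsRoot M ρ lam) :
    ((coxGraph M).induce (supp lam)).Connected := by
  obtain ⟨w, s, hws⟩ := hroot
  have hρ' : Hrho M ρ := hρ
  have hdich := M.toCoxeterSystem.length_mul_simple w s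
  rw [CoxeterMatrix.toCoxeterSystem_simple] at hdich
  rcases hdich with h | h
  · have := (main_pos_conn M ρ hρ' (M.toCoxeterSystem.length w) w s rfl h).2
    rwa [hws] at this
  · set w' := w * M.simple s with hw'def
    have hcancel : w' * M.simple s = w := cancel_right_simple M w s
    have h' : M.toCoxeterSystem.length (w' * M.simple s)
        = M.toCoxeterSystem.length w' + 1 := by
      rw [hcancel]
      omega
    have hconn := (main_pos_conn M ρ hρ' (M.toCoxeterSystem.length w') w' s rfl h').2
    have hneg : ρ w (sroot s) = - ρ w' (sroot s) := by
      conv_lhs => rw [← hcancel]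
      rw [map_mul, Module.End.mul_apply]
      have hs : ρ (M.simple s) (sroot s) = - sroot s := by
        rw [hρ, form_sroot_sroot, pairing_diag]
        module
      rw [hs, map_neg]
    rw [← hws, hneg, supp_neg]
    exact hconn
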